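/- Let x̃ ∈ {ℓ,u}^n with x̃ not equal to any of the points x^0,…,x^n. Let r be the smallest index j with x̃_j = ℓ, let s be the largest index j with x̃_j = u, and let p be the number of coordinates of x̃ equal to u (so r ≤ p ≤ s−1). Then (x̃, m(x̃)) satisfies a valid core inequality β₀ + Σ_{j=1}^n β_j x_j + β′ y ≥ 0 exactly if and only if (x^p, m(x^p)) satisfies the inequality exactly and β_r = β_{r+1} = … = β_s. -/

import Mathlib

open Finset

/-- The symmetric multilinear polynomial `m(x) = ∑_{i=2}^n c_i ∑_{|J|=i} ∏_{j∈J} x_j`. -/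
noncomputable def mPoly (n : ℕ) (c : ℕ → ℝ) (x : Fin n → ℝ) : ℝ :=
  ∑ i ∈ Finset.Icc 2 n, c i *
    ∑ J ∈ Finset.powersetCard i (Finset.univ : Finset (Fin n)), ∏ j ∈ J, x j

/-- The box `X = [ℓ,u]^n`. -/
def Xbox (n : ℕ) (ℓ u : ℝ) : Set (Fin n → ℝ) :=
  {x | ∀ j, x j ∈ Set.Icc ℓ u}

/-- The graph `G = {(x,y) : x ∈ X, y = m(x)}`. -/
def Gset (n : ℕ) (ℓ u : ℝ) (c : ℕ → ℝ) : Set ((Fin n → ℝ) × ℝ) :=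
  {p | p.1 ∈ Xbox n ℓ u ∧ p.2 = mPoly n c p.1}

/-- The point `x^k` whose first `k` coordinates are `u` and remaining ones are `ℓ`. -/
def xpt (n : ℕ) (ℓ u : ℝ) (k : ℕ) : Fin n → ℝ :=
  fun j => if (j : ℕ) < k then u else ℓ

/-- `m(x^k)`. -/
noncomputable def mval (n : ℕ) (ℓ u : ℝ) (c : ℕ → ℝ) (k : ℕ) : ℝ :=
  mPoly n c (xpt n ℓ u k)

/-- `L_k(β₀,β) = β₀ + u ∑_{j=1}^k β_j + ℓ ∑_{j=k+1}^n β_j`. -/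
noncomputable def Lk (n : ℕ) (ℓ u : ℝ) (β₀ : ℝ) (β : Fin n → ℝ) (k : ℕ) : ℝ :=
  β₀ + u * ∑ j ∈ Finset.univ.filter (fun j : Fin n => (j : ℕ) < k), β j
     + ℓ * ∑ j ∈ Finset.univ.filter (fun j : Fin n => k ≤ (j : ℕ)), β j

/-- The left-hand side `β₀ + ∑_j β_j x_j + β′ y` of an inequality, at the point `p = (x,y)`. -/
noncomputable def ineqLhs (n : ℕ) (β₀ : ℝ) (β : Fin n → ℝ) (β' : ℝ)
    (p : (Fin n → ℝ) × ℝ) : ℝ :=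
  β₀ + ∑ j, β j * p.1 j + β' * p.2

/-- A core inequality: `β′ ∈ {1,-1}` and nondecreasing coefficients `β₁ ≤ … ≤ βₙ`. -/
def IsCore (n : ℕ) (β : Fin n → ℝ) (β' : ℝ) : Prop :=
  (β' = 1 ∨ β' = -1) ∧ Monotone β

/-- Validity of the inequality `β₀ + ∑_j β_j x_j + β′ y ≥ 0` on `conv(G)`. -/
def IsValid (n : ℕ) (ℓ u : ℝ) (c : ℕ → ℝ) (β₀ : ℝ) (β : Fin n → ℝ) (β' : ℝ) : Prop :=
  ∀ p ∈ convexHull ℝ (Gset n ℓ u c), 0 ≤ ineqLhs n β₀ β β' p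

/-- The point `p` satisfies the inequality exactly (with equality). -/
def ExactAt (n : ℕ) (β₀ : ℝ) (β : Fin n → ℝ) (β' : ℝ) (p : (Fin n → ℝ) × ℝ) : Prop :=
  ineqLhs n β₀ β β' p = 0

/-- Facet-defining: there are `n+1` affinely independent points of `conv(G)`
satisfying the inequality exactly. -/
def IsFacet (n : ℕ) (ℓ u : ℝ) (c : ℕ → ℝ) (β₀ : ℝ) (β : Fin n → ℝ) (β' : ℝ) : Prop :=
  ∃ pts : Fin (n + 1) → (Fin n → ℝ) × ℝ,
    AffineIndependent ℝ pts ∧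
    ∀ i, pts i ∈ convexHull ℝ (Gset n ℓ u c) ∧ ExactAt n β₀ β β' (pts i)

/-- The point `(x^k, m(x^k))` of `G`. -/
noncomputable def vtx (n : ℕ) (ℓ u : ℝ) (c : ℕ → ℝ) (k : ℕ) : (Fin n → ℝ) × ℝ :=
  (xpt n ℓ u k, mval n ℓ u c k)

lemma card_filter_lt (n k : ℕ) (h : k ≤ n) :
    ((Finset.univ : Finset (Fin n)).filter (fun j : Fin n => (j : ℕ) < k)).card = k := by
  have heq : (Finset.univ : Finset (Fin n)).filter (fun j : Fin n => (j : ℕ) < k) =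
      (Finset.univ : Finset (Fin k)).map (Fin.castLEEmb h) := by
    ext j
    simp only [mem_filter, mem_univ, true_and, mem_map]
    constructor
    · rintro hj
      exact ⟨⟨(j : ℕ), hj⟩, by ext; simp⟩
    · rintro ⟨a, rfl⟩
      simpa using a.isLt
  rw [heq, Finset.card_map, Finset.card_univ, Fintype.card_fin]

lemma mPoly_comp_perm (n : ℕ) (c : ℕ → ℝ) (x : Fin n → ℝ) (σ : Equiv.Perm (Fin n)) :
    mPoly n c (fun j => x (σ j)) = mPoly n c x := by
  unfold mPoly
  refine Finset.sum_congr rfl fun i _ => ?_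
  congr 1
  refine Finset.sum_nbij' (fun J => J.map σ.toEmbedding) (fun J => J.map σ.symm.toEmbedding)
    ?_ ?_ ?_ ?_ ?_
  · intro J hJ; simp [Finset.mem_powersetCard] at *; exact hJ
  · intro J hJ; simp [Finset.mem_powersetCard] at *; exact hJ
  · intro J hJ
    ext j; simp
  · intro J hJ
    ext j; simp
  · intro J hJ
    rw [Finset.prod_map]
    rfl
/-- For a vertex `x̃ ∈ {ℓ,u}^n` that is not one of the `x^k`, with `r`
the smallest index with `x̃_j = ℓ`, `s` the largest index with `x̃_j = u`, and `p` the
number of coordinates equal to `u`: the point `(x̃, m(x̃))` satisfies a valid core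
inequality exactly iff `(x^p, m(x^p))` does and `β_r = … = β_s`. -/
theorem stmt3 (n : ℕ) (hn : 2 ≤ n) (ℓ u : ℝ) (hlu : ℓ < u) (c : ℕ → ℝ)
    (β₀ : ℝ) (β : Fin n → ℝ) (β' : ℝ)
    (hcore : IsCore n β β') (hvalid : IsValid n ℓ u c β₀ β β')
    (xt : Fin n → ℝ) (hvert : ∀ j, xt j = ℓ ∨ xt j = u)
    (hnot : ∀ k ≤ n, xt ≠ xpt n ℓ u k)
    (r s : Fin n)
    (hr : IsLeast {j : Fin n | xt j = ℓ} r)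
    (hs : IsGreatest {j : Fin n | xt j = u} s)
    (p : ℕ) (hp : p = (Finset.univ.filter (fun j : Fin n => xt j = u)).card) :
    ExactAt n β₀ β β' (xt, mPoly n c xt) ↔
      (ExactAt n β₀ β β' (vtx n ℓ u c p) ∧
        ∀ i j : Fin n, r ≤ i → i ≤ s → r ≤ j → j ≤ s → β i = β j) := by
  obtain ⟨hβ', hmono⟩ := hcore
  have hlune : ℓ ≠ u := ne_of_lt hlu
  set U : Finset (Fin n) := Finset.univ.filter (fun j : Fin n => xt j = u) with hU
  set V : Finset (Fin n) := Finset.univ.filter (fun j : Fin n => (j : ℕ) < p) with hV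
  have hmemU : ∀ j, j ∈ U ↔ xt j = u := fun j => by simp [hU]
  have hmemV : ∀ j : Fin n, j ∈ V ↔ (j : ℕ) < p := fun j => by simp [hV]
  have hpn : p ≤ n := by
    rw [hp]
    exact le_trans (Finset.card_filter_le _ _) (by simp)
  have hUcard : U.card = p := hp.symm
  have hVcard : V.card = p := card_filter_lt n p hpn
  have hxtl : ∀ j, j ∉ U → xt j = ℓ := fun j hj =>
    (hvert j).resolve_right (fun h => hj ((hmemU j).2 h))
  have hjltr : ∀ j : Fin n, (j : ℕ) < (r : ℕ) → xt j = u := by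
    intro j hj
    refine (hvert j).resolve_left fun h => ?_
    have : r ≤ j := hr.2 h
    rw [Fin.le_def] at this
    omega
  have hrl : xt r = ℓ := hr.1
  have hsu : xt s = u := hs.1
  have hrU : r ∉ U := fun h => hlune (hrl ▸ (hmemU r).1 h)
  have hsU : s ∈ U := (hmemU s).2 hsu
  have hrs : r < s := by
    by_contra hc
    push_neg at hc
    apply hnot (r : ℕ) (le_of_lt r.isLt)
    funext j
    by_cases hjr : (j : ℕ) < (r : ℕ)
    · rw [hjltr j hjr]
      simp [xpt, hjr]
    · have hxl : xt j = ℓ := by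
        rcases hvert j with h | h
        · exact h
        · exfalso
          have h1 : j ≤ s := hs.2 h
          have h2 : s ≤ r := hc
          rw [Fin.le_def] at h1 h2
          have hjrr : (j : ℕ) = (r : ℕ) := by omega
          have : j = r := Fin.ext hjrr
          rw [this] at h
          exact hlune (hrl ▸ h)
      simp [xpt, hjr, hxl]
  have hrsval : (r : ℕ) < (s : ℕ) := hrs
  have hrp : (r : ℕ) < p := by
    have hsub : insert s (Finset.univ.filter (fun j : Fin n => (j : ℕ) < (r : ℕ))) ⊆ U := by
      intro j hj
      rcases Finset.mem_insert.1 hj with rfl | hj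
      · exact hsU
      · exact (hmemU j).2 (hjltr j (by simpa using (Finset.mem_filter.1 hj).2))
    have hns : s ∉ Finset.univ.filter (fun j : Fin n => (j : ℕ) < (r : ℕ)) := by
      simp only [Finset.mem_filter, Finset.mem_univ, true_and]
      omega
    have hle := Finset.card_le_card hsub
    rw [Finset.card_insert_of_notMem hns, card_filter_lt n (r : ℕ) (le_of_lt r.isLt),
      hUcard] at hle
    omega
  have hps : p ≤ (s : ℕ) := by
    have hsub : U ⊆ (Finset.univ.filter (fun j : Fin n => (j : ℕ) < (s : ℕ) + 1)).erase r := by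
      intro j hj
      refine Finset.mem_erase.2 ⟨fun h => hrU (h ▸ hj), ?_⟩
      simp only [Finset.mem_filter, Finset.mem_univ, true_and]
      have := hs.2 ((hmemU j).1 hj)
      rw [Fin.le_def] at this
      omega
    have hrf : r ∈ Finset.univ.filter (fun j : Fin n => (j : ℕ) < (s : ℕ) + 1) := by
      simp only [Finset.mem_filter, Finset.mem_univ, true_and]
      omega
    have hle := Finset.card_le_card hsub
    rw [Finset.card_erase_of_mem hrf, card_filter_lt n ((s : ℕ) + 1) s.isLt, hUcard] at hle
    omega
  have hUV : U ≠ V := by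
    intro hEq
    apply hnot p hpn
    funext j
    by_cases hjp : (j : ℕ) < p
    · have hju : xt j = u := (hmemU j).1 (by rw [hEq]; exact (hmemV j).2 hjp)
      simp [xpt, hjp, hju]
    · have hnU : j ∉ U := fun h => hjp ((hmemV j).1 (by rw [← hEq]; exact h))
      simp [xpt, hjp, hxtl j hnU]
  have hABcard : (U \ V).card = (V \ U).card :=
    Finset.card_sdiff_comm (hUcard.trans hVcard.symm)
  have hAne : (U \ V).Nonempty := by
    rw [Finset.sdiff_nonempty]
    intro hsub
    exact hUV (Finset.eq_of_subset_of_card_le hsub (by rw [hUcard, hVcard]))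
  have hBne : (V \ U).Nonempty := by
    rw [← Finset.card_pos, ← hABcard, Finset.card_pos]
    exact hAne
  have hAfact : ∀ a ∈ U \ V, p ≤ (a : ℕ) ∧ a ≤ s := by
    intro a ha
    obtain ⟨haU, haV⟩ := Finset.mem_sdiff.1 ha
    exact ⟨Nat.le_of_not_lt (fun h => haV ((hmemV a).2 h)), hs.2 ((hmemU a).1 haU)⟩
  have hBfact : ∀ b ∈ V \ U, (b : ℕ) < p ∧ r ≤ b := by
    intro b hb
    obtain ⟨hbV, hbU⟩ := Finset.mem_sdiff.1 hb
    exact ⟨(hmemV b).1 hbV, hr.2 (hxtl b hbU)⟩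
  have hrB : r ∈ V \ U := Finset.mem_sdiff.2 ⟨(hmemV r).2 hrp, hrU⟩
  have hsA : s ∈ U \ V :=
    Finset.mem_sdiff.2 ⟨hsU, fun h => absurd ((hmemV s).1 h) (by omega)⟩
  -- m(x̃) = m(x^p) via a permutation
  have hcard1 : Fintype.card {j : Fin n // xt j = u} = Fintype.card {j : Fin n // (j : ℕ) < p} := by
    rw [Fintype.card_subtype, Fintype.card_subtype]
    rw [← hU, ← hV, hUcard, hVcard]
  have e1 : {j : Fin n // xt j = u} ≃ {j : Fin n // (j : ℕ) < p} := Fintype.equivOfCardEq hcard1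
  have hcard2 : Fintype.card {j : Fin n // ¬ xt j = u}
      = Fintype.card {j : Fin n // ¬ (j : ℕ) < p} := by
    rw [Fintype.card_subtype_compl, Fintype.card_subtype_compl, hcard1]
  have e2 : {j : Fin n // ¬ xt j = u} ≃ {j : Fin n // ¬ (j : ℕ) < p} :=
    Fintype.equivOfCardEq hcard2
  have hσ : ∀ j, xt j = xpt n ℓ u p (Equiv.subtypeCongr e1 e2 j) := by
    intro j
    by_cases h : xt j = u
    · have h2 : Equiv.subtypeCongr e1 e2 j = (e1 ⟨j, h⟩ : Fin n) := by
        simp [Equiv.subtypeCongr, h]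
      rw [h, h2]
      have := (e1 ⟨j, h⟩).2
      simp [xpt, this]
    · have h2 : Equiv.subtypeCongr e1 e2 j = (e2 ⟨j, h⟩ : Fin n) := by
        simp [Equiv.subtypeCongr, h]
      have hjl : xt j = ℓ := (hvert j).resolve_right h
      have := (e2 ⟨j, h⟩).2
      rw [hjl, h2]
      simp [xpt, this]
  have hmEq : mPoly n c xt = mval n ℓ u c p := by
    have hxteq : xt = fun j => xpt n ℓ u p (Equiv.subtypeCongr e1 e2 j) := funext hσ
    rw [hxteq, mPoly_comp_perm]
    rfl
  -- key identity
  have hxtval : ∀ j ∈ U \ V, β j * xt j - β j * xpt n ℓ u p j = (u - ℓ) * β j := by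
    intro j hj
    obtain ⟨hjU, hjV⟩ := Finset.mem_sdiff.1 hj
    have h1 : xt j = u := (hmemU j).1 hjU
    have h2 : ¬ (j : ℕ) < p := fun h => hjV ((hmemV j).2 h)
    rw [h1]
    simp only [xpt, if_neg h2]
    ring
  have hxtval2 : ∀ j ∈ V \ U, β j * xt j - β j * xpt n ℓ u p j = -((u - ℓ) * β j) := by
    intro j hj
    obtain ⟨hjV, hjU⟩ := Finset.mem_sdiff.1 hj
    have h1 : xt j = ℓ := hxtl j hjU
    have h2 : (j : ℕ) < p := (hmemV j).1 hjV
    rw [h1]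
    simp only [xpt, if_pos h2]
    ring
  have hsumdiff : (∑ j, β j * xt j) - (∑ j, β j * xpt n ℓ u p j)
      = (u - ℓ) * ((∑ j ∈ U \ V, β j) - ∑ j ∈ V \ U, β j) := by
    rw [← Finset.sum_sub_distrib]
    have hvanish : ∀ j ∈ (Finset.univ : Finset (Fin n)), j ∉ (U \ V) ∪ (V \ U) →
        β j * xt j - β j * xpt n ℓ u p j = 0 := by
      intro j _ hj
      rw [Finset.mem_union, Finset.mem_sdiff, Finset.mem_sdiff] at hj
      push_neg at hj
      by_cases h : xt j = u
      · have hjU : j ∈ U := (hmemU j).2 h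
        have hjV : j ∈ V := hj.1 hjU
        rw [h]
        simp only [xpt, if_pos ((hmemV j).1 hjV)]
        ring
      · have hjU : j ∉ U := fun hh => h ((hmemU j).1 hh)
        have hjV : j ∉ V := fun hh => hjU (hj.2 hh)
        rw [(hvert j).resolve_right h]
        simp only [xpt, if_neg (fun hh => hjV ((hmemV j).2 hh))]
        ring
    rw [← Finset.sum_subset (Finset.subset_univ ((U \ V) ∪ (V \ U))) hvanish,
      Finset.sum_union disjoint_sdiff_sdiff,
      Finset.sum_congr rfl hxtval, Finset.sum_congr rfl hxtval2,
      Finset.sum_neg_distrib, ← Finset.mul_sum, ← Finset.mul_sum]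
    ring
  have hkey : ineqLhs n β₀ β β' (xt, mPoly n c xt)
      = ineqLhs n β₀ β β' (vtx n ℓ u c p)
        + (u - ℓ) * ((∑ j ∈ U \ V, β j) - ∑ j ∈ V \ U, β j) := by
    simp only [ineqLhs, vtx, hmEq]
    have := hsumdiff
    linarith
  -- validity at vtx p
  have hvtxG : vtx n ℓ u c p ∈ Gset n ℓ u c := by
    refine ⟨fun j => ?_, rfl⟩
    simp only [vtx, xpt]
    split
    · exact ⟨le_of_lt hlu, le_refl u⟩
    · exact ⟨le_refl ℓ, le_of_lt hlu⟩
  have hE : 0 ≤ ineqLhs n β₀ β β' (vtx n ℓ u c p) :=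
    hvalid _ (subset_convexHull ℝ _ hvtxG)
  -- max of β over V \ U
  set m : ℝ := ((V \ U).image β).max' (hBne.image β) with hm
  obtain ⟨b₀, hb₀, hb₀m⟩ := Finset.mem_image.1 (((V \ U).image β).max'_mem (hBne.image β))
  rw [← hm] at hb₀m
  have hble : ∀ b ∈ V \ U, β b ≤ m := fun b hb =>
    Finset.le_max' _ _ (Finset.mem_image_of_mem β hb)
  have hmle : ∀ a ∈ U \ V, m ≤ β a := by
    intro a ha
    rw [← hb₀m]
    apply hmono
    rw [Fin.le_def]
    have h1 := (hBfact b₀ hb₀).1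
    have h2 := (hAfact a ha).1
    omega
  have t1 : ((U \ V).card : ℝ) * m ≤ ∑ a ∈ U \ V, β a := by
    calc ((U \ V).card : ℝ) * m = ∑ _a ∈ U \ V, m := by rw [Finset.sum_const, nsmul_eq_mul]
      _ ≤ ∑ a ∈ U \ V, β a := Finset.sum_le_sum hmle
  have t2 : (∑ b ∈ V \ U, β b) ≤ ((V \ U).card : ℝ) * m := by
    calc (∑ b ∈ V \ U, β b) ≤ ∑ _b ∈ V \ U, m := Finset.sum_le_sum hble
      _ = ((V \ U).card : ℝ) * m := by rw [Finset.sum_const, nsmul_eq_mul]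
  have hcards : ((U \ V).card : ℝ) = ((V \ U).card : ℝ) := Nat.cast_inj.mpr hABcard
  rw [hcards] at t1
  have hD : 0 ≤ (∑ j ∈ U \ V, β j) - ∑ j ∈ V \ U, β j := by linarith
  constructor
  · intro hexact
    have hex0 : ineqLhs n β₀ β β' (xt, mPoly n c xt) = 0 := hexact
    have hul : (0:ℝ) < u - ℓ := by linarith
    have hE0 : ineqLhs n β₀ β β' (vtx n ℓ u c p) = 0 := by nlinarith
    have hSeq : (∑ j ∈ U \ V, β j) = ∑ j ∈ V \ U, β j := by nlinarith
    -- all β values on U\V and V\U equal m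
    have hA0 : ∀ a ∈ U \ V, β a - m = 0 := by
      rw [← Finset.sum_eq_zero_iff_of_nonneg (fun a ha => sub_nonneg.2 (hmle a ha))]
      rw [Finset.sum_sub_distrib, Finset.sum_const, nsmul_eq_mul, hcards]
      linarith
    have hB0 : ∀ b ∈ V \ U, m - β b = 0 := by
      rw [← Finset.sum_eq_zero_iff_of_nonneg (fun b hb => sub_nonneg.2 (hble b hb))]
      rw [Finset.sum_sub_distrib, Finset.sum_const, nsmul_eq_mul]
      linarith
    have hβrs : β r = β s := by
      have h1 := hB0 r hrB
      have h2 := hA0 s hsA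
      linarith
    refine ⟨hE0, fun i j hri his hrj hjs => ?_⟩
    have hi1 : β i = β r := le_antisymm (hβrs ▸ hmono his) (hmono hri)
    have hj1 : β j = β r := le_antisymm (hβrs ▸ hmono hjs) (hmono hrj)
    rw [hi1, hj1]
  · rintro ⟨hE0, hconst⟩
    have hSeq : (∑ j ∈ U \ V, β j) = ∑ j ∈ V \ U, β j := by
      have hA : ∀ a ∈ U \ V, β a = β r := by
        intro a ha
        refine hconst a r ?_ (hAfact a ha).2 (le_refl r) (le_of_lt hrs)
        rw [Fin.le_def]
        have := (hAfact a ha).1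
        omega
      have hB : ∀ b ∈ V \ U, β b = β r := by
        intro b hb
        refine hconst b r (hBfact b hb).2 ?_ (le_refl r) (le_of_lt hrs)
        rw [Fin.le_def]
        have := (hBfact b hb).1
        omega
      rw [Finset.sum_congr rfl hA, Finset.sum_congr rfl hB, Finset.sum_const,
        Finset.sum_const, hABcard]
    show ineqLhs n β₀ β β' (xt, mPoly n c xt) = 0
    have hE0' : ineqLhs n β₀ β β' (vtx n ℓ u c p) = 0 := hE0
    rw [hkey, hE0', hSeq]
    ring
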